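/- Let n have shift orbit of cardinality d. The d eigenvectors |E_{n,m}(Λ_j)⟩, for m ranging over the multiples 0, M/d, …, (d−1)M/d of M/d, together with the Fock basis {X^k|n⟩ : 0 ≤ k < d} of the Pauli subspace span(E_n), form a pair of mutually unbiased bases: |⟨X^k n | E_{n,m}(Λ_j)⟩| = 1/√d for all k and m. -/

import Mathlib

open Finset

noncomputable section

/-- Total photon number `|n|`. -/
def totalPhotons {M : ℕ} (n : Fin M → ℕ) : ℕ := ∑ m : Fin M, n m

/-- Clock label `μ(n) = Σ m·n(m)`. -/
def clockLabel {M : ℕ} (n : Fin M → ℕ) : ℕ := ∑ m : Fin M, (m : ℕ) * n m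

/-- `ω = exp(2πi/M)`. -/
def omegaM (M : ℕ) : ℂ := Complex.exp (2 * Real.pi * Complex.I / M)

/-- The Fock space over `M` modes: amplitudes on occupation vectors. -/
abbrev Fock (M : ℕ) := (Fin M → ℕ) → ℂ

/-- Mode-shift operator: `X |n⟩ = |X·n⟩` with `(X·n)(m) = n(m−1)` mod `M`. -/
def fockX {M : ℕ} [NeZero M] (f : Fock M) : Fock M := fun v => f (fun m => v (m + 1))

/-- Phase-shift operator: `Z |n⟩ = ω^{μ(n)} |n⟩`. -/
def fockZ {M : ℕ} (f : Fock M) : Fock M := fun v => omegaM M ^ clockLabel v * f v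

/-- Fock basis state `|n⟩`. -/
def fockDelta {M : ℕ} (n : Fin M → ℕ) : Fock M := fun v => if v = n then 1 else 0

/-- Cyclic mode shift on occupation vectors: `(X·n)(m) = n(m-1)` mod `M`. -/
def modeShift {M : ℕ} [NeZero M] (n : Fin M → ℕ) : Fin M → ℕ := fun m => n (m - 1)

/-- `ω^{1/2} = exp(πi/M)`. -/
def omegaHalf (M : ℕ) : ℂ := Complex.exp (Real.pi * Complex.I / M)

/-- Generalized Pauli operator `Λ_j = X Z^j`. -/
def fockLambda {M : ℕ} [NeZero M] (j : ℤ) (f : Fock M) : Fock M :=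
  fockX (fun v => omegaM M ^ (j * (clockLabel v : ℤ)) * f v)

/-- The `Λ_j` eigenvector `|E_{n,m}(Λ_j)⟩ = (1/√d) Σ_{k<d} ω^{−(½(M−1)j|n|+m)k} Λ_j^k |n⟩`
on the Pauli subspace of `n` (with `ω^{1/2} = exp(πi/M)`). -/
def pauliEigvec {M : ℕ} [NeZero M] (j : ℤ) (n : Fin M → ℕ) (d m : ℕ) : Fock M :=
  fun v => (1 / Real.sqrt d : ℂ) *
    ∑ k ∈ Finset.range d,
      omegaHalf M ^ (-((((M : ℤ) - 1) * j * (totalPhotons n : ℤ) + 2 * (m : ℤ)) * k)) *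
        ((fockLambda j)^[k] (fockDelta n)) v


lemma modeShift_injective {M : ℕ} [NeZero M] : Function.Injective (modeShift (M := M)) := by
  intro a b h
  funext m
  have := congrFun h (m + 1)
  simpa [modeShift] using this

lemma shift_modeShift {M : ℕ} [NeZero M] (x : Fin M → ℕ) :
    (fun m => modeShift x (m + 1)) = x := by
  funext m; simp [modeShift]

lemma abs_omegaHalf (M : ℕ) : ‖omegaHalf M‖ = 1 := by
  have h : omegaHalf M = Complex.exp (((Real.pi / M : ℝ) : ℂ) * Complex.I) := by
    unfold omegaHalf; push_cast; ring_nf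
  rw [h, Complex.norm_exp_ofReal_mul_I]

lemma abs_omegaM (M : ℕ) : ‖omegaM M‖ = 1 := by
  have h : omegaM M = Complex.exp (((2 * Real.pi / M : ℝ) : ℂ) * Complex.I) := by
    unfold omegaM; push_cast; ring_nf
  rw [h, Complex.norm_exp_ofReal_mul_I]

lemma fockLambda_iterate_delta {M : ℕ} [NeZero M] (j : ℤ) (n : Fin M → ℕ) :
    ∀ k : ℕ, ∃ c : ℂ, ‖c‖ = 1 ∧
      ((fockLambda j)^[k] (fockDelta n)) =
        fun v => c * fockDelta (modeShift^[k] n) v := by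
  intro k
  induction k with
  | zero => exact ⟨1, by simp, by funext v; simp⟩
  | succ k ih =>
    obtain ⟨c, hc, hrep⟩ := ih
    refine ⟨omegaM M ^ (j * (clockLabel (modeShift^[k] n) : ℤ)) * c, ?_, ?_⟩
    · rw [norm_mul, hc, mul_one, norm_zpow, abs_omegaM, one_zpow]
    · funext v
      rw [Function.iterate_succ_apply', hrep]
      show omegaM M ^ (j * (clockLabel (fun m => v (m+1)) : ℤ)) *
          (c * fockDelta (modeShift^[k] n) (fun m => v (m+1))) =
        (omegaM M ^ (j * (clockLabel (modeShift^[k] n) : ℤ)) * c) *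
          fockDelta (modeShift^[k+1] n) v
      by_cases h : v = modeShift^[k+1] n
      · subst h
        rw [Function.iterate_succ_apply',
          show (fun m => (modeShift (modeShift^[k] n)) (m+1)) = modeShift^[k] n from
            shift_modeShift _]
        simp [fockDelta]
      · have h2 : (fun m => v (m+1)) ≠ modeShift^[k] n := by
          intro he
          apply h
          rw [Function.iterate_succ_apply', ← he]
          funext m
          simp [modeShift]
        have h3 : v ≠ modeShift^[k] (modeShift n) := by
          rwa [← Function.iterate_succ_apply]
        simp [fockDelta, h2, h3]

/-- the `Λ_j` eigenbasis `{|E_{n,m}(Λ_j)⟩}` (for `m` a multiple of `M/d`) and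
the Fock basis `{X^k|n⟩ : k < d}` of the Pauli subspace `span(E_n)` are mutually unbiased:
`|⟨X^k n | E_{n,m}(Λ_j)⟩| = 1/√d` for all `k` and `m`. -/
theorem pauli_eigenbasis_mub (M : ℕ) [NeZero M] (j : ℤ) (n : Fin M → ℕ) (d : ℕ)
    (hd : 0 < d) (hfix : modeShift^[d] n = n)
    (hmin : ∀ k, 0 < k → k < d → modeShift^[k] n ≠ n) (hdM : d ∣ M) :
    ∀ k < d, ∀ m : ℕ, (M / d) ∣ m →
      ‖pauliEigvec j n d m (modeShift^[k] n)‖ = 1 / Real.sqrt d := by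
  intro k hk m hm
  have key : ∀ a b : ℕ, a < d → b < d → modeShift^[a] n = modeShift^[b] n → a = b := by
    intro a b ha hb h
    by_contra hne
    rcases Nat.lt_or_ge a b with hab | hab
    · have h1 : modeShift^[b] n = modeShift^[a] (modeShift^[b-a] n) := by
        rw [← Function.iterate_add_apply]; congr 1; omega
      rw [h1] at h
      have h2 := (modeShift_injective.iterate a) h
      exact hmin (b - a) (by omega) (by omega) h2.symm
    · have h1 : modeShift^[a] n = modeShift^[b] (modeShift^[a-b] n) := by
        rw [← Function.iterate_add_apply]; congr 1; omega
      rw [h1] at h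
      have h2 := (modeShift_injective.iterate b) h
      exact hmin (a - b) (by omega) (by omega) h2
  choose c hc hrep using fockLambda_iterate_delta j n
  unfold pauliEigvec
  simp only [hrep]
  rw [Finset.sum_eq_single_of_mem k (Finset.mem_range.mpr hk)]
  · rw [norm_mul, norm_mul, norm_mul, norm_zpow, abs_omegaHalf, one_zpow, hc]
    simp [fockDelta, abs_of_nonneg (Real.sqrt_nonneg (d : ℝ)), map_div₀]
  · intro b hb hbk
    have hne : modeShift^[k] n ≠ modeShift^[b] n := fun h =>
      hbk (key b k (Finset.mem_range.mp hb) hk h.symm)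
    simp [fockDelta, hne]
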